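/- Combining the previous facts: if Tr_B[U(ρ_A ⊗ |ψ_k⟩⟨ψ_k|)U†] = |e⟩⟨e| for orthonormal {|ψ_k⟩}_{k=1}^m and all k, then for any coefficients a_k with Σ|a_k|² = 1 and nonzero superposition |φ⟩ = Σ_k a_k|ψ_k⟩ (normalized), Tr_B[U(ρ_A ⊗ |φ⟩⟨φ|)U†] = |e⟩⟨e|. -/

import Mathlib

open Matrix Kronecker ComplexOrder

/-- A density matrix: positive semidefinite with unit trace. -/
def IsDensityMatrix {n : Type*} [Fintype n] [DecidableEq n]
    (ρ : Matrix n n ℂ) : Prop :=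
  ρ.PosSemidef ∧ ρ.trace = 1

/-- Partial trace over the second (B) tensor factor. -/
noncomputable def ptraceB {a b : Type*} [Fintype a] [Fintype b]
    (M : Matrix (a × b) (a × b) ℂ) : Matrix a a ℂ :=
  fun i j => ∑ k : b, M (i, k) (j, k)

section Aux

variable {a b : Type*} [Fintype a] [Fintype b]

lemma ptraceB_add (M N : Matrix (a × b) (a × b) ℂ) :
    ptraceB (M + N) = ptraceB M + ptraceB N := by
  ext i j; simp [ptraceB, Finset.sum_add_distrib]

lemma ptraceB_smul (c : ℂ) (M : Matrix (a × b) (a × b) ℂ) :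
    ptraceB (c • M) = c • ptraceB M := by
  ext i j; simp [ptraceB, Finset.mul_sum]

lemma ptraceB_conjTranspose (M : Matrix (a × b) (a × b) ℂ) :
    (ptraceB M)ᴴ = ptraceB Mᴴ := by
  ext i j
  simp [ptraceB, conjTranspose_apply, map_sum]

lemma trace_ptraceB (M : Matrix (a × b) (a × b) ℂ) :
    (ptraceB M).trace = M.trace := by
  simp [ptraceB, Matrix.trace, Matrix.diag, Fintype.sum_prod_type]

lemma ptraceB_posSemidef [DecidableEq b] {M : Matrix (a × b) (a × b) ℂ}
    (hM : M.PosSemidef) : (ptraceB M).PosSemidef := by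
  refine posSemidef_iff_dotProduct_mulVec.mpr ⟨?_, ?_⟩
  · ext i j
    have h := hM.1
    have h' : Mᴴ = M := h
    calc (ptraceB M)ᴴ i j = ptraceB Mᴴ i j := by rw [ptraceB_conjTranspose]
    _ = ptraceB M i j := by rw [h']
  · intro x
    have key : star x ⬝ᵥ (ptraceB M) *ᵥ x
        = ∑ k : b, star (fun p : a × b => if p.2 = k then x p.1 else 0) ⬝ᵥ
            M *ᵥ (fun p : a × b => if p.2 = k then x p.1 else 0) := by
      have rhs : ∀ k : b, star (fun p : a × b => if p.2 = k then x p.1 else 0) ⬝ᵥ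
          M *ᵥ (fun p : a × b => if p.2 = k then x p.1 else 0)
          = ∑ i : a, ∑ j : a, star (x i) * (M (i, k) (j, k) * x j) := by
        intro k
        simp [dotProduct, mulVec, Fintype.sum_prod_type, apply_ite, mul_ite, ite_mul,
          Finset.mul_sum]
      simp only [rhs]
      simp only [dotProduct, mulVec, ptraceB, Pi.star_apply]
      rw [Finset.sum_comm]
      refine Finset.sum_congr rfl fun i _ => ?_
      calc star (x i) * ∑ j, (∑ k, M (i, k) (j, k)) * x j
          = ∑ j, ∑ k, star (x i) * (M (i, k) (j, k) * x j) := by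
            rw [Finset.mul_sum]
            refine Finset.sum_congr rfl fun j _ => ?_
            rw [Finset.sum_mul, Finset.mul_sum]
      _ = ∑ k, ∑ j, star (x i) * (M (i, k) (j, k) * x j) := Finset.sum_comm
    rw [key]
    exact Finset.sum_nonneg fun k _ => hM.dotProduct_mulVec_nonneg _

lemma kronecker_conjTranspose' {c d : Type*} (A : Matrix a c ℂ) (B : Matrix b d ℂ) :
    (A ⊗ₖ B)ᴴ = Aᴴ ⊗ₖ Bᴴ := by
  ext ⟨i, p⟩ ⟨j, q⟩
  simp [conjTranspose_apply, mul_comm]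

lemma kronecker_posSemidef [DecidableEq a] [DecidableEq b]
    {A : Matrix a a ℂ} {B : Matrix b b ℂ}
    (hA : A.PosSemidef) (hB : B.PosSemidef) : (A ⊗ₖ B).PosSemidef := by
  exact hA.kronecker hB

lemma vecMulVec_posSemidef (v : a → ℂ) : (vecMulVec v (star v)).PosSemidef := by
  refine posSemidef_iff_dotProduct_mulVec.mpr ⟨?_, ?_⟩
  · ext i j
    simp [conjTranspose_apply, vecMulVec_apply, mul_comm]
  · intro x
    have : star x ⬝ᵥ (vecMulVec v (star v)) *ᵥ x
        = star (star v ⬝ᵥ x) * (star v ⬝ᵥ x) := by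
      simp only [dotProduct, mulVec, vecMulVec_apply, Pi.star_apply, star_sum, star_mul']
      rw [Finset.sum_mul]
      refine Finset.sum_congr rfl fun i _ => ?_
      rw [Finset.mul_sum, Finset.mul_sum]
      refine Finset.sum_congr rfl fun j _ => ?_
      simp only [star_star]
      ring
    rw [this]
    exact star_mul_self_nonneg _

lemma smul_posSemidef {A : Matrix a a ℂ} (hA : A.PosSemidef) {c : ℂ} (hc : 0 ≤ c) :
    (c • A).PosSemidef := by
  have hcs : star c = c := by
    rw [Complex.star_def, Complex.conj_eq_iff_im]
    exact ((Complex.le_def.mp hc).2).symm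
  refine posSemidef_iff_dotProduct_mulVec.mpr ⟨?_, ?_⟩
  · ext i j
    simp only [conjTranspose_apply, Matrix.smul_apply, smul_eq_mul, star_mul', hcs]
    have h := congrFun (congrFun hA.1 i) j
    rw [show star (A j i) = A i j from h, mul_comm]
  · intro x
    have h : star x ⬝ᵥ (c • A) *ᵥ x = c * (star x ⬝ᵥ A *ᵥ x) := by
      rw [smul_mulVec, dotProduct_smul, smul_eq_mul]
    rw [h]
    exact mul_nonneg hc (hA.dotProduct_mulVec_nonneg x)

end Aux

section Phi

variable {dA dB : ℕ}

/-- The channel `X ↦ Tr_B (U (ρA ⊗ X) U†)` as a linear map. -/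
noncomputable def Phi (U : Matrix (Fin dA × Fin dB) (Fin dA × Fin dB) ℂ)
    (ρA : Matrix (Fin dA) (Fin dA) ℂ) :
    Matrix (Fin dB) (Fin dB) ℂ →ₗ[ℂ] Matrix (Fin dA) (Fin dA) ℂ where
  toFun X := ptraceB (U * (ρA ⊗ₖ X) * Uᴴ)
  map_add' X Y := by
    show ptraceB (U * (ρA ⊗ₖ (X + Y)) * Uᴴ) = _
    rw [Matrix.kronecker_add, Matrix.mul_add, Matrix.add_mul, ptraceB_add]
  map_smul' c X := by
    show ptraceB (U * (ρA ⊗ₖ (c • X)) * Uᴴ) = _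
    rw [Matrix.kronecker_smul, Matrix.mul_smul, Matrix.smul_mul, ptraceB_smul]
    rfl

variable (U : Matrix (Fin dA × Fin dB) (Fin dA × Fin dB) ℂ)
    (ρA : Matrix (Fin dA) (Fin dA) ℂ)

lemma Phi_trace (hU : U ∈ Matrix.unitaryGroup (Fin dA × Fin dB) ℂ)
    (X : Matrix (Fin dB) (Fin dB) ℂ) :
    (Phi U ρA X).trace = ρA.trace * X.trace := by
  have h1 : Uᴴ * U = 1 := by
    have := hU.1
    rwa [Matrix.star_eq_conjTranspose] at this
  show (ptraceB (U * (ρA ⊗ₖ X) * Uᴴ)).trace = _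
  rw [trace_ptraceB, Matrix.trace_mul_cycle, h1, Matrix.one_mul, Matrix.trace_kronecker]

lemma Phi_posSemidef (hρA : ρA.PosSemidef) {X : Matrix (Fin dB) (Fin dB) ℂ}
    (hX : X.PosSemidef) : (Phi U ρA X).PosSemidef := by
  exact ptraceB_posSemidef ((kronecker_posSemidef hρA hX).mul_mul_conjTranspose_same U)

lemma Phi_conjTranspose (hρA : ρA.IsHermitian) (X : Matrix (Fin dB) (Fin dB) ℂ) :
    Phi U ρA Xᴴ = (Phi U ρA X)ᴴ := by
  show ptraceB (U * (ρA ⊗ₖ Xᴴ) * Uᴴ) = (ptraceB (U * (ρA ⊗ₖ X) * Uᴴ))ᴴ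
  rw [ptraceB_conjTranspose]
  congr 1
  rw [Matrix.conjTranspose_mul, Matrix.conjTranspose_mul, Matrix.conjTranspose_conjTranspose,
    kronecker_conjTranspose', hρA.eq, Matrix.mul_assoc]

end Phi

section Extreme

variable {n : Type*} [Fintype n] [DecidableEq n]

lemma vecMulVec_mulVec (e v : n → ℂ) :
    (vecMulVec e (star e)) *ᵥ v = (star e ⬝ᵥ v) • e := by
  funext i
  simp only [mulVec, vecMulVec_apply, dotProduct, Pi.smul_apply, Pi.star_apply, smul_eq_mul]
  rw [Finset.sum_mul]
  exact Finset.sum_congr rfl fun j _ => by ring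

/-- A pure state is extreme: if `σ` is PSD with trace 1 and `2 P - σ` is PSD,
where `P = |e⟩⟨e|` with `‖e‖ = 1`, then `σ = P`. -/
lemma pure_extreme {e : n → ℂ} (he : star e ⬝ᵥ e = 1)
    {σ : Matrix n n ℂ} (hσ : σ.PosSemidef) (htr : σ.trace = 1)
    (h2 : ((2 : ℂ) • vecMulVec e (star e) - σ).PosSemidef) :
    σ = vecMulVec e (star e) := by
  -- Step 1: σ kills vectors orthogonal to e
  have step1 : ∀ v : n → ℂ, star e ⬝ᵥ v = 0 → σ *ᵥ v = 0 := by
    intro v hv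
    have h1 : star v ⬝ᵥ ((2 : ℂ) • vecMulVec e (star e) - σ) *ᵥ v
        = - (star v ⬝ᵥ σ *ᵥ v) := by
      rw [Matrix.sub_mulVec, dotProduct_sub, smul_mulVec, _root_.vecMulVec_mulVec, hv]
      simp
    have h3 := h2.dotProduct_mulVec_nonneg v
    rw [h1] at h3
    have h4 := hσ.dotProduct_mulVec_nonneg v
    have h0 : star v ⬝ᵥ σ *ᵥ v = 0 := le_antisymm (neg_nonneg.mp h3) h4
    exact (hσ.dotProduct_mulVec_zero_iff v).mp h0
  -- Step 2: action of σ on any vector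
  have step2 : ∀ u : n → ℂ, σ *ᵥ u = (star e ⬝ᵥ u) • (σ *ᵥ e) := by
    intro u
    have hv : star e ⬝ᵥ (u - (star e ⬝ᵥ u) • e) = 0 := by
      rw [dotProduct_sub, dotProduct_smul, he]
      simp
    have h := step1 _ hv
    rw [Matrix.mulVec_sub, Matrix.mulVec_smul, sub_eq_zero] at h
    exact h
  -- Step 3: σ = (σ e) e†
  have step3 : σ = vecMulVec (σ *ᵥ e) (star e) := by
    ext i j
    have h := congrFun (step2 (Pi.single j 1)) i
    rw [Matrix.mulVec_single] at h
    simp only [MulOpposite.op_one, one_smul, Matrix.col_apply] at h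
    have hd : star e ⬝ᵥ Pi.single j 1 = star (e j) := by
      rw [dotProduct_single]; simp
    rw [hd] at h
    rw [vecMulVec_apply, h]
    simp [mul_comm]
  -- Step 4: ⟨e|σ|e⟩ = 1
  have step4 : star e ⬝ᵥ (σ *ᵥ e) = 1 := by
    have h : σ.trace = star e ⬝ᵥ (σ *ᵥ e) := by
      conv_lhs => rw [step3]
      simp only [Matrix.trace, Matrix.diag, vecMulVec_apply, dotProduct, Pi.star_apply]
      exact Finset.sum_congr rfl fun i _ => mul_comm _ _
    rw [← h, htr]
  -- auxiliary: ∑ star((σe) j) * e j = 1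
  have hsum : ∑ j, star ((σ *ᵥ e) j) * e j = 1 := by
    have h : ∑ j, star ((σ *ᵥ e) j) * e j = star (∑ j, star (e j) * (σ *ᵥ e) j) := by
      rw [star_sum]
      exact Finset.sum_congr rfl fun j _ => by rw [star_mul', star_star, mul_comm]
    rw [h]
    have h2' : ∑ j, star (e j) * (σ *ᵥ e) j = star e ⬝ᵥ (σ *ᵥ e) := rfl
    rw [h2', step4, star_one]
  -- Step 5: σ e = e
  have step5 : σ *ᵥ e = e := by
    funext i
    have hval : ∀ j, σ i j = star ((σ *ᵥ e) j) * e i := by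
      intro j
      have hh : σ i j = star (σ j i) := (congrFun (congrFun hσ.1 i) j).symm
      have hji : σ j i = (σ *ᵥ e) j * star (e i) := by
        conv_lhs => rw [step3]
        rw [vecMulVec_apply]; rfl
      rw [hh, hji, star_mul', star_star]
    have hdef : (σ *ᵥ e) i = ∑ j, σ i j * e j := rfl
    rw [hdef]
    calc ∑ j, σ i j * e j = (∑ j, star ((σ *ᵥ e) j) * e j) * e i := by
          rw [Finset.sum_mul]
          exact Finset.sum_congr rfl fun j _ => by rw [hval j]; ring
    _ = e i := by rw [hsum, one_mul]
  rw [step3, step5]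

end Extreme

/-- **Superpositions of DEH-achieving states also achieve DEH.**
If each orthonormal source state `ψ k` yields the pure output `|e⟩⟨e|`, then any
normalized superposition `φ = ∑ k, a k • ψ k` (with `∑ |a k|² = 1`) yields the
same output. -/
theorem DEH_superposition
    {dA dB : ℕ}
    (U : Matrix (Fin dA × Fin dB) (Fin dA × Fin dB) ℂ)
    (hU : U ∈ Matrix.unitaryGroup (Fin dA × Fin dB) ℂ)
    (ρA : Matrix (Fin dA) (Fin dA) ℂ) (hρA : IsDensityMatrix ρA)
    (e : Fin dA → ℂ) (he : ∑ i, ‖e i‖ ^ 2 = 1)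
    {m : ℕ} (ψ : Fin m → (Fin dB → ℂ))
    (horth : ∀ k l, ∑ x, (starRingEnd ℂ) (ψ k x) * ψ l x = if k = l then 1 else 0)
    (hDEH : ∀ k,
      ptraceB (U * (ρA ⊗ₖ Matrix.vecMulVec (ψ k) (star (ψ k))) * Uᴴ)
        = Matrix.vecMulVec e (star e))
    (a : Fin m → ℂ) (ha : ∑ k, ‖a k‖ ^ 2 = 1)
    (φ : Fin dB → ℂ) (hφ : φ = ∑ k, a k • ψ k) :
    ptraceB (U * (ρA ⊗ₖ Matrix.vecMulVec φ (star φ)) * Uᴴ)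
      = Matrix.vecMulVec e (star e) := by
  classical
  set P := Matrix.vecMulVec e (star e) with hP
  -- ⟨e,e⟩ = 1 in ℂ
  have he' : star e ⬝ᵥ e = 1 := by
    have h1 : ∀ i, star (e i) * e i = ((‖e i‖ ^ 2 : ℝ) : ℂ) := fun i => by
      rw [Complex.star_def, mul_comm, Complex.mul_conj']
      norm_cast
    simp only [dotProduct, Pi.star_apply, h1]
    exact_mod_cast he
  have hPhi : ∀ k, Phi U ρA (vecMulVec (ψ k) (star (ψ k))) = P := fun k => hDEH k
  have hhalf : (0 : ℂ) ≤ 2⁻¹ := by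
    rw [Complex.le_def]; norm_num
  -- trace of the rank-one cross matrices
  have htrM : ∀ p q, (vecMulVec (ψ p) (star (ψ q))).trace = if q = p then 1 else 0 := by
    intro p q
    have h := horth q p
    simp only [Matrix.trace, Matrix.diag, vecMulVec_apply, Pi.star_apply] at *
    rw [← h]
    exact Finset.sum_congr rfl fun x _ => mul_comm _ _
  -- cross terms vanish
  have hcross : ∀ k l, k ≠ l → Phi U ρA (vecMulVec (ψ k) (star (ψ l))) = 0 := by
    intro k l hkl
    set Xkl := Phi U ρA (vecMulVec (ψ k) (star (ψ l))) with hXkl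
    set Xlk := Phi U ρA (vecMulVec (ψ l) (star (ψ k))) with hXlk
    have key : ∀ c : ℂ, star c * c = 1 → star c • Xkl + c • Xlk = 0 := by
      intro c hc
      have hσdef : ∀ d : ℂ, star d * d = 1 →
          Phi U ρA ((2⁻¹ : ℂ) • vecMulVec (ψ k + d • ψ l) (star (ψ k + d • ψ l)))
            = P + (2⁻¹ : ℂ) • (star d • Xkl + d • Xlk)
          ∧ (Phi U ρA ((2⁻¹ : ℂ) •
              vecMulVec (ψ k + d • ψ l) (star (ψ k + d • ψ l)))).PosSemidef
          ∧ (Phi U ρA ((2⁻¹ : ℂ) •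
              vecMulVec (ψ k + d • ψ l) (star (ψ k + d • ψ l)))).trace = 1 := by
        intro d hd
        have hvv : vecMulVec (ψ k + d • ψ l) (star (ψ k + d • ψ l))
            = vecMulVec (ψ k) (star (ψ k)) + vecMulVec (ψ l) (star (ψ l))
              + (star d • vecMulVec (ψ k) (star (ψ l))
                 + d • vecMulVec (ψ l) (star (ψ k))) := by
          ext i j
          simp only [vecMulVec_apply, Matrix.add_apply, Matrix.smul_apply, Pi.add_apply,
            Pi.smul_apply, Pi.star_apply, star_add, star_mul', smul_eq_mul]
          linear_combination ψ l i * star (ψ l j) * hd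
        refine ⟨?_, ?_, ?_⟩
        · rw [_root_.map_smul, hvv, map_add, map_add, map_add, _root_.map_smul,
            _root_.map_smul, hPhi k, hPhi l, ← hXkl, ← hXlk]
          module
        · exact Phi_posSemidef U ρA hρA.1 (smul_posSemidef (vecMulVec_posSemidef _) hhalf)
        · rw [Phi_trace U ρA hU, hρA.2, one_mul, trace_smul, hvv, trace_add, trace_add, trace_add,
            trace_smul, trace_smul, htrM k k, htrM k l, htrM l k, htrM l l,
            if_pos rfl, if_pos rfl, if_neg hkl.symm, if_neg hkl]
          simp
          norm_num
      have hc' : star (-c) * (-c) = 1 := by rw [star_neg, neg_mul_neg]; exact hc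
      obtain ⟨hf1, hp1, ht1⟩ := hσdef c hc
      obtain ⟨hf2, hp2, ht2⟩ := hσdef (-c) hc'
      have hext := pure_extreme he' hp1 (by rw [hf1] at ht1 ⊢; exact ht1) ?_
      · rw [hf1] at hext
        have hz : (2⁻¹ : ℂ) • (star c • Xkl + c • Xlk) = 0 := by
          have h := hext
          rwa [add_eq_left] at h
        rcases smul_eq_zero.mp hz with h | h
        · exact absurd h (by norm_num)
        · exact h
      · rw [hf1]
        have : (2 : ℂ) • P - (P + (2⁻¹ : ℂ) • (star c • Xkl + c • Xlk))
            = P + (2⁻¹ : ℂ) • (star (-c) • Xkl + (-c) • Xlk) := by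
          rw [star_neg]; module
        rw [this, ← hf2]
        exact hp2
    -- instantiate with c = 1 and c = I
    have k1 := key 1 (by norm_num)
    rw [star_one, one_smul, one_smul] at k1
    have k2 := key Complex.I (by
      rw [Complex.star_def, Complex.conj_I, neg_mul, Complex.I_mul_I, neg_neg])
    rw [Complex.star_def, Complex.conj_I] at k2
    have hXlkneg : Xlk = -Xkl := eq_neg_of_add_eq_zero_right k1
    rw [hXlkneg, smul_neg, ← neg_smul, ← add_smul] at k2
    rcases smul_eq_zero.mp k2 with h | h
    · exact absurd h (by norm_num [Complex.ext_iff])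
    · exact h
  -- bilinear expansion of the projector onto φ
  have hexp : vecMulVec φ (star φ)
      = ∑ k, ∑ l, (a k * star (a l)) • vecMulVec (ψ k) (star (ψ l)) := by
    ext i j
    rw [hφ]
    simp only [vecMulVec_apply, Matrix.sum_apply, Matrix.smul_apply, Finset.sum_apply,
      Pi.smul_apply, Pi.star_apply, star_sum, star_mul', smul_eq_mul]
    rw [Finset.sum_mul]
    refine Finset.sum_congr rfl fun k _ => ?_
    rw [Finset.mul_sum]
    refine Finset.sum_congr rfl fun l _ => ?_
    ring
  -- assemble
  have hmain : Phi U ρA (vecMulVec φ (star φ)) = P := by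
    rw [hexp, map_sum]
    have hall : ∀ k, Phi U ρA (∑ l, (a k * star (a l)) • vecMulVec (ψ k) (star (ψ l)))
        = (a k * star (a k)) • P := by
      intro k
      rw [map_sum, Finset.sum_eq_single k]
      · rw [_root_.map_smul, hPhi k]
      · intro l _ hlk
        rw [_root_.map_smul, hcross k l (Ne.symm hlk), smul_zero]
      · intro h
        exact absurd (Finset.mem_univ k) h
    simp only [hall]
    rw [← Finset.sum_smul]
    have hsum1 : ∑ k, a k * star (a k) = 1 := by
      have h1 : ∀ k, a k * star (a k) = ((‖a k‖ ^ 2 : ℝ) : ℂ) := fun k => by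
        rw [Complex.star_def, Complex.mul_conj']
        norm_cast
      simp only [h1]
      exact_mod_cast ha
    rw [hsum1, one_smul]
  exact hmain
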